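/- Let h be a d-dimensional complex vector space with a nondegenerate symmetric ℂ-bilinear form ⟨·,·⟩, let ℓ be a nonzero rational number, and let K be the additive subgroup of h generated by a ℤ-basis {α_1, …, α_d} that is also a ℂ-basis of h (so K is a full-rank lattice spanning h over ℂ); assume ℓ⟨α, β⟩ ∈ ℤ for all α, β ∈ K. Define K^o = { x ∈ h : ⟨α, x⟩ ∈ ℤ for all α ∈ K }. Then 2ℓK ⊆ K^o, and on the quotient group G = K^o/2ℓK the assignment (x + 2ℓK, y + 2ℓK) ↦ ⟨x, y⟩/ℓ + 2ℤ is a well-defined symmetric ℤ-bilinear ℂ/2ℤ-valued form, and this form is nondegenerate: if g ∈ G pairs to 0 + 2ℤ with every element of G, then g = 0. -/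

import Mathlib

/-- Let `h` be a `d`-dimensional complex vector space with a nondegenerate
symmetric ℂ-bilinear form `B = ⟨·,·⟩`, `ℓ` a nonzero rational number, and `K` the
additive subgroup of `h` generated by a ℤ-basis `α_1, …, α_d` which is also a ℂ-basis of
`h`; assume `ℓ⟨α,β⟩ ∈ ℤ` for all `α, β ∈ K`.  Let `K^o` be the dual subgroup
`{x : ⟨a,x⟩ ∈ ℤ for all a ∈ K}` and `T = 2ℓK`.  Then `T ⊆ K^o`, and on the quotient
group `G = K^o/2ℓK` the assignment `(x + 2ℓK, y + 2ℓK) ↦ ⟨x,y⟩/ℓ + 2ℤ` is a well-defined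
symmetric ℤ-bilinear `ℂ/2ℤ`-valued form which is nondegenerate. -/
theorem quotient_dual_form_nondegenerate
    (d : ℕ) (h : Type) [AddCommGroup h] [Module ℂ h]
    (B : h → h → ℂ)
    (hBaddL : ∀ x y z : h, B (x + y) z = B x z + B y z)
    (hBsmulL : ∀ (c : ℂ) (x y : h), B (c • x) y = c * B x y)
    (hBaddR : ∀ x y z : h, B x (y + z) = B x y + B x z)
    (hBsmulR : ∀ (c : ℂ) (x y : h), B x (c • y) = c * B x y)
    (hBsymm : ∀ x y : h, B x y = B y x)
    (hBnd : ∀ x : h, (∀ y : h, B x y = 0) → x = 0)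
    (ℓ : ℚ) (hℓ : ℓ ≠ 0)
    (α : Fin d → h) (hbasis : ∃ b : Module.Basis (Fin d) ℂ h, ⇑b = α)
    (K : AddSubgroup h) (hK : K = AddSubgroup.closure (Set.range α))
    (hInt : ∀ x ∈ K, ∀ y ∈ K, ∃ n : ℤ, (ℓ : ℂ) * B x y = (n : ℂ))
    (Ko : AddSubgroup h) (hKo : ∀ x : h, x ∈ Ko ↔ ∀ a ∈ K, ∃ n : ℤ, B a x = (n : ℂ))
    (T : AddSubgroup h) (hT : ∀ x : h, x ∈ T ↔ ∃ a ∈ K, x = ((2 * ℓ : ℚ) : ℂ) • a) :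
    T ≤ Ko ∧
    ∃ q : (Ko ⧸ T.addSubgroupOf Ko) → (Ko ⧸ T.addSubgroupOf Ko)
        → ℂ ⧸ AddSubgroup.zmultiples (2 : ℂ),
      (∀ x y : Ko, q (QuotientAddGroup.mk x) (QuotientAddGroup.mk y)
          = QuotientAddGroup.mk (B (x : h) (y : h) / (ℓ : ℂ))) ∧
      (∀ g1 g2 g3 : Ko ⧸ T.addSubgroupOf Ko, q (g1 + g2) g3 = q g1 g3 + q g2 g3) ∧
      (∀ g1 g2 g3 : Ko ⧸ T.addSubgroupOf Ko, q g1 (g2 + g3) = q g1 g2 + q g1 g3) ∧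
      (∀ g1 g2 : Ko ⧸ T.addSubgroupOf Ko, q g1 g2 = q g2 g1) ∧
      (∀ g1 : Ko ⧸ T.addSubgroupOf Ko, (∀ g2, q g1 g2 = 0) → g1 = 0) := by
  classical
  obtain ⟨b, hb⟩ := hbasis
  haveI : FiniteDimensional ℂ h := Module.Finite.of_basis b
  have hℓC : (ℓ : ℂ) ≠ 0 := by exact_mod_cast hℓ
  set Bl : LinearMap.BilinForm ℂ h := LinearMap.mk₂ ℂ B hBaddL hBsmulL hBaddR hBsmulR with hBldef
  have hBl : ∀ x y, Bl x y = B x y := fun _ _ => rfl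
  have hnd : Bl.Nondegenerate := ⟨fun x hx => hBnd x hx, fun y hy => hBnd y (fun x => by rw [hBsymm]; exact hy x)⟩
  have hsym : Bl.IsSymm := LinearMap.BilinForm.isSymm_def.mpr fun x y => hBsymm x y
  have hBsubL : ∀ x y z : h, B (x - y) z = B x z - B y z := by
    intro x y z; rw [← hBl, ← hBl, ← hBl, map_sub Bl x y, LinearMap.sub_apply]
  have hBsubR : ∀ x y z : h, B x (y - z) = B x y - B x z := fun x y z => map_sub (Bl x) y z
  set β : Fin d → h := fun i => Bl.dualBasis hnd b i with hβdef
  have hβl : ∀ i j, B (β i) (α j) = if j = i then 1 else 0 := by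
    intro i j; rw [← hb, ← hBl]; exact Bl.apply_dualBasis_left hnd b i j
  have hβr : ∀ i j, B (α i) (β j) = if i = j then 1 else 0 := by
    intro i j; rw [← hb, ← hBl]; exact Bl.apply_dualBasis_right hnd hsym b i j
  have hαK : ∀ i, α i ∈ K := by intro i; rw [hK]; exact AddSubgroup.subset_closure ⟨i, rfl⟩
  -- every a ∈ K pairs integrally with each β j
  have hKβ : ∀ j, ∀ a ∈ K, ∃ n : ℤ, B a (β j) = (n : ℂ) := by
    intro j a ha
    rw [hK] at ha
    induction ha using AddSubgroup.closure_induction with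
    | mem x hx =>
      obtain ⟨i, rfl⟩ := hx
      by_cases hij : i = j
      · exact ⟨1, by rw [hβr i j, if_pos hij]; norm_num⟩
      · exact ⟨0, by rw [hβr i j, if_neg hij]; norm_num⟩
    | zero => exact ⟨0, by rw [← hBl]; simp⟩
    | add x y hx hy ihx ihy =>
      obtain ⟨m, hm⟩ := ihx; obtain ⟨n, hn⟩ := ihy
      exact ⟨m + n, by rw [hBaddL, hm, hn]; push_cast; ring⟩
    | neg x hx ihx =>
      obtain ⟨m, hm⟩ := ihx
      refine ⟨-m, ?_⟩
      have : B (-x) (β j) = -B x (β j) := by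
        rw [← hBl, ← hBl, map_neg Bl x, LinearMap.neg_apply]
      rw [this, hm]; push_cast; ring
  have hβKo : ∀ j, β j ∈ Ko := fun j => (hKo (β j)).mpr (hKβ j)
  -- T ≤ Ko
  have hTKo : T ≤ Ko := by
    intro x hx
    obtain ⟨a, ha, rfl⟩ := (hT x).mp hx
    rw [hKo]
    intro c hc
    obtain ⟨n, hn⟩ := hInt c hc a ha
    refine ⟨2 * n, ?_⟩
    rw [hBsmulR]
    push_cast [← hn]
    ring
  refine ⟨hTKo, ?_⟩
  -- well-definedness
  have key : ∀ x y x' y' : Ko, (-x + x' : Ko) ∈ T.addSubgroupOf Ko →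
      (-y + y' : Ko) ∈ T.addSubgroupOf Ko →
      (QuotientAddGroup.mk (B (x : h) y / ℓ) : ℂ ⧸ AddSubgroup.zmultiples (2:ℂ))
        = QuotientAddGroup.mk (B (x' : h) y' / ℓ) := by
    intro x y x' y' hx hy
    rw [AddSubgroup.mem_addSubgroupOf] at hx hy
    obtain ⟨a, ha, hxa⟩ := (hT _).mp hx
    obtain ⟨c, hc, hyc⟩ := (hT _).mp hy
    have hxx' : (x' : h) - x = ((2 * ℓ : ℚ) : ℂ) • a := by
      rw [← hxa]; push_cast; abel
    have hyy' : (y' : h) - y = ((2 * ℓ : ℚ) : ℂ) • c := by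
      rw [← hyc]; push_cast; abel
    rw [QuotientAddGroup.eq]
    obtain ⟨m, hm⟩ := (hKo (y' : h)).mp y'.2 a ha
    obtain ⟨n, hn⟩ := (hKo (x : h)).mp x.2 c hc
    refine AddSubgroup.mem_zmultiples_iff.mpr ⟨m + n, ?_⟩
    have expand : B (x' : h) y' - B (x : h) y
        = B ((x' : h) - x) y' + B (x : h) ((y' : h) - y) := by
      rw [hBsubL, hBsubR]; ring
    have e1 : B ((x' : h) - x) (y' : h) = ((2 * ℓ : ℚ) : ℂ) * (m : ℂ) := by
      rw [hxx', hBsmulL, hm]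
    have e2 : B (x : h) ((y' : h) - y) = ((2 * ℓ : ℚ) : ℂ) * (n : ℂ) := by
      rw [hyy', hBsmulR, hBsymm (x : h) c, hn]
    have : -(B (x : h) y / ℓ) + B (x' : h) y' / ℓ
        = (B (x' : h) y' - B (x : h) y) / ℓ := by ring
    rw [this, expand, e1, e2]
    push_cast
    field_simp
    ring
  -- the quotient form
  refine ⟨fun g1 g2 => Quotient.liftOn₂' g1 g2
      (fun x y => QuotientAddGroup.mk (B (x : h) y / ℓ))
      (fun x y x' y' hx hy => key x y x' y'
        ((QuotientAddGroup.leftRel_apply).mp hx)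
        ((QuotientAddGroup.leftRel_apply).mp hy)), ?_, ?_, ?_, ?_, ?_⟩
  · intro x y; rfl
  · intro g1 g2 g3
    induction g1 using QuotientAddGroup.induction_on with | H x =>
    induction g2 using QuotientAddGroup.induction_on with | H y =>
    induction g3 using QuotientAddGroup.induction_on with | H z =>
    show (QuotientAddGroup.mk (B ((x + y : Ko) : h) z / ℓ) : ℂ ⧸ AddSubgroup.zmultiples (2:ℂ))
      = QuotientAddGroup.mk (B (x : h) z / ℓ) + QuotientAddGroup.mk (B (y : h) z / ℓ)
    rw [← QuotientAddGroup.mk_add]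
    congr 1
    push_cast
    rw [hBaddL]; ring
  · intro g1 g2 g3
    induction g1 using QuotientAddGroup.induction_on with | H x =>
    induction g2 using QuotientAddGroup.induction_on with | H y =>
    induction g3 using QuotientAddGroup.induction_on with | H z =>
    show (QuotientAddGroup.mk (B (x : h) ((y + z : Ko) : h) / ℓ) : ℂ ⧸ AddSubgroup.zmultiples (2:ℂ))
      = QuotientAddGroup.mk (B (x : h) y / ℓ) + QuotientAddGroup.mk (B (x : h) z / ℓ)
    rw [← QuotientAddGroup.mk_add]
    congr 1
    push_cast
    rw [hBaddR]; ring
  · intro g1 g2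
    induction g1 using QuotientAddGroup.induction_on with | H x =>
    induction g2 using QuotientAddGroup.induction_on with | H y =>
    show (QuotientAddGroup.mk (B (x : h) y / ℓ) : ℂ ⧸ AddSubgroup.zmultiples (2:ℂ))
      = QuotientAddGroup.mk (B (y : h) x / ℓ)
    rw [hBsymm]
  · -- nondegeneracy
    intro g1 hg1
    induction g1 using QuotientAddGroup.induction_on with | H x =>
    -- pairing with each β j is in 2ℓℤ
    have hcoef : ∀ j, ∃ n : ℤ, B (x : h) (β j) = 2 * ℓ * n := by
      intro j
      have := hg1 (QuotientAddGroup.mk ⟨β j, hβKo j⟩)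
      have h0 : (QuotientAddGroup.mk (B (x : h) (β j) / ℓ) : ℂ ⧸ AddSubgroup.zmultiples (2:ℂ)) = 0 := this
      rw [QuotientAddGroup.eq_zero_iff] at h0
      obtain ⟨n, hn⟩ := AddSubgroup.mem_zmultiples_iff.mp h0
      refine ⟨n, ?_⟩
      have : B (x : h) (β j) / ℓ = 2 * n := by rw [← hn, zsmul_eq_mul]; ring
      field_simp at this
      rw [this]; ring
    choose n hn using hcoef
    set z : h := ∑ j, (n j : ℂ) • α j with hz
    have hzK : z ∈ K := by
      rw [hz]
      refine AddSubgroup.sum_mem K ?_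
      intro j _
      have : (n j : ℂ) • α j = n j • α j := by
        exact (Int.cast_smul_eq_zsmul ℂ (n j) (α j))
      rw [this]
      exact AddSubgroup.zsmul_mem K (hαK j) (n j)
    have hxz : (x : h) = ((2 * ℓ : ℚ) : ℂ) • z := by
      have hdiff : ∀ w : h, B w ((x : h) - ((2 * ℓ : ℚ) : ℂ) • z) = 0 := by
        have hβdiff : ∀ j, B (β j) ((x : h) - ((2 * ℓ : ℚ) : ℂ) • z) = 0 := by
          intro j
          rw [hBsubR, hBsmulR]
          have e1 : B (β j) (x : h) = 2 * ℓ * n j := by rw [hBsymm]; exact hn j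
          have e2 : B (β j) z = (n j : ℂ) := by
            rw [hz, ← hBl, map_sum (Bl (β j))]
            have : ∀ i ∈ Finset.univ, Bl (β j) ((n i : ℂ) • α i)
                = if i = j then (n i : ℂ) else 0 := by
              intro i _
              rw [hBl, hBsmulR, hβl j i]
              by_cases hij : i = j
              · rw [if_pos hij, if_pos hij]; ring
              · rw [if_neg hij, if_neg hij]; ring
            rw [Finset.sum_congr rfl this, Finset.sum_ite_eq' Finset.univ j fun i => (n i : ℂ)]
            simp
          rw [e1, e2]
          push_cast
          ring
        intro w
        -- express via the dual basis β
        have hflip : (Bl.flip ((x : h) - ((2 * ℓ : ℚ) : ℂ) • z)) = 0 := by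
          apply (Bl.dualBasis hnd b).ext
          intro j
          exact hβdiff j
        have h2 := congrArg (fun f => f w) hflip
        simp only [LinearMap.flip_apply, LinearMap.zero_apply] at h2
        exact h2
      have h3 := hBnd ((x : h) - ((2 * ℓ : ℚ) : ℂ) • z) (fun y => by rw [hBsymm]; exact hdiff y)
      exact sub_eq_zero.mp h3
    have hxT : (x : h) ∈ T := (hT _).mpr ⟨z, hzK, hxz⟩
    show QuotientAddGroup.mk x = 0
    rw [QuotientAddGroup.eq_zero_iff, AddSubgroup.mem_addSubgroupOf]
    exact hxT
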